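/- Let f : ℝ → ℝ be C¹ and μ₀ > 0 be such that f'(s) > −μ₀ for all |s| > M₀ (M₀ > 0 fixed). Then there exists C > 0 such that F(s) ≤ f(s)·s + (μ₀/2)·s² + C for all s with |s| > M₀, where F(s) = ∫₀ˢ f(τ)dτ. -/

import Mathlib

open intervalIntegral

/-- If `f'(s) > −μ₀` for `|s| > M₀`, then the antiderivative `F(s) = ∫₀ˢ f`
satisfies `F(s) ≤ f(s)·s + (μ₀/2)·s² + C` for `|s| > M₀`. -/
theorem stmt_8 (f : ℝ → ℝ) (hf : ContDiff ℝ 1 f) (mu0 M0 : ℝ)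
    (hmu0 : 0 < mu0) (hM0 : 0 < M0)
    (hderiv : ∀ s : ℝ, M0 < |s| → -mu0 < deriv f s) :
    ∃ C > (0 : ℝ), ∀ s : ℝ, M0 < |s| →
      (∫ τ in (0 : ℝ)..s, f τ) ≤ f s * s + (mu0 / 2) * s ^ 2 + C := by
  have hfd : Differentiable ℝ f := hf.differentiable one_ne_zero
  set G : ℝ → ℝ := fun s => f s * s + mu0 / 2 * s ^ 2 - ∫ τ in (0 : ℝ)..s, f τ with hGdef
  have hGd : ∀ s : ℝ, HasDerivAt G (s * (deriv f s + mu0)) s := by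
    intro s
    have h1 : HasDerivAt f (deriv f s) s := (hfd s).hasDerivAt
    have h2 : HasDerivAt (fun u : ℝ => f u * u) (deriv f s * s + f s * 1) s :=
      h1.mul (hasDerivAt_id s)
    have h3 : HasDerivAt (fun u : ℝ => mu0 / 2 * u ^ 2) (mu0 / 2 * (2 * s ^ 1)) s :=
      (hasDerivAt_pow 2 s).const_mul (mu0 / 2)
    have h4 : HasDerivAt (fun u : ℝ => ∫ τ in (0 : ℝ)..u, f τ) (f s) s := by
      exact hf.continuous.integral_hasStrictDerivAt 0 s |>.hasDerivAt
    have : HasDerivAt G (deriv f s * s + f s * 1 + mu0 / 2 * (2 * s ^ 1) - f s) s :=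
      (h2.add h3).sub h4
    convert this using 1
    ring
  have hGdiff : Differentiable ℝ G := fun s => (hGd s).differentiableAt
  have hderivG : ∀ s, deriv G s = s * (deriv f s + mu0) := fun s => (hGd s).deriv
  have hmono : StrictMonoOn G (Set.Ici M0) := by
    apply strictMonoOn_of_deriv_pos (convex_Ici M0) hGdiff.continuous.continuousOn
    intro x hx
    rw [interior_Ici] at hx
    have hxpos : 0 < x := hM0.trans hx
    have hx' : M0 < |x| := by rwa [abs_of_pos hxpos]
    rw [hderivG]
    nlinarith [hderiv x hx']
  have hanti : StrictAntiOn G (Set.Iic (-M0)) := by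
    apply strictAntiOn_of_deriv_neg (convex_Iic (-M0)) hGdiff.continuous.continuousOn
    intro x hx
    rw [interior_Iic] at hx
    have hxM : x < -M0 := hx
    have hxneg : x < 0 := by linarith
    have hx' : M0 < |x| := by rw [abs_of_neg hxneg]; linarith
    rw [hderivG]
    nlinarith [hderiv x hx']
  refine ⟨|G M0| + |G (-M0)| + 1, by positivity, ?_⟩
  intro s hs
  have key : -G s ≤ |G M0| + |G (-M0)| + 1 := by
    rcases lt_or_ge 0 s with hpos | hneg
    · have hsM : M0 < s := by rwa [abs_of_pos hpos] at hs
      have h1 : G M0 < G s := hmono (Set.self_mem_Ici) (le_of_lt hsM) hsM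
      have h2 : -G M0 ≤ |G M0| := neg_le_abs _
      have := abs_nonneg (G (-M0))
      linarith
    · have hsM : s < -M0 := by
        rw [abs_of_nonpos hneg] at hs; linarith
      have h1 : G (-M0) < G s := hanti (le_of_lt hsM) Set.self_mem_Iic hsM
      have h2 : -G (-M0) ≤ |G (-M0)| := neg_le_abs _
      have := abs_nonneg (G M0)
      linarith
  have hGs : G s = f s * s + mu0 / 2 * s ^ 2 - ∫ τ in (0 : ℝ)..s, f τ := rfl
  rw [hGs] at key
  linarith
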